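/- Let K be a two-sided ideal of the upper triangular matrix algebra Tₙ with K ∩ Dₙ = {0}, and let E = {d ∈ Dₙ : d_{ii} = d_{jj} whenever i < j and the matrix unit e_{ij} ∉ K}. Then for any subspace F ⊆ E, the subspace F + K is a Lie ideal of Tₙ. -/

import Mathlib

/-- Let `K` be a two-sided ideal of the upper triangular matrix algebra
`Tₙ` with `K ∩ Dₙ = {0}`, and let
`E = {d diagonal : d ᵢᵢ = d ⱼⱼ whenever i < j and e₍ᵢⱼ₎ ∉ K}`.  Then for any subspace
`F ⊆ E`, the subspace `F + K` is a Lie ideal of `Tₙ`. -/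
theorem addend_plus_ideal_is_lie_ideal
    {n : ℕ} (K : Submodule ℂ (Matrix (Fin n) (Fin n) ℂ))
    (hKsub : ∀ x ∈ K, ∀ i j : Fin n, j < i → x i j = 0)
    (hKl : ∀ a : Matrix (Fin n) (Fin n) ℂ, (∀ i j : Fin n, j < i → a i j = 0) →
      ∀ x ∈ K, a * x ∈ K)
    (hKr : ∀ a : Matrix (Fin n) (Fin n) ℂ, (∀ i j : Fin n, j < i → a i j = 0) →
      ∀ x ∈ K, x * a ∈ K)
    (hKD : ∀ x ∈ K, x.IsDiag → x = 0)
    (F : Submodule ℂ (Matrix (Fin n) (Fin n) ℂ))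
    (hF : ∀ f ∈ F, f.IsDiag ∧
      ∀ i j : Fin n, i < j → Matrix.single i j (1 : ℂ) ∉ K → f i i = f j j) :
    ∀ x ∈ F ⊔ K, ∀ a : Matrix (Fin n) (Fin n) ℂ,
      (∀ i j : Fin n, j < i → a i j = 0) → x * a - a * x ∈ F ⊔ K := by
  intro x hx a ha
  have keyK : ∀ k ∈ K, k * a - a * k ∈ K := fun k hk =>
    K.sub_mem (hKr a ha k hk) (hKl a ha k hk)
  have keyF : ∀ f ∈ F, f * a - a * f ∈ K := by
    intro f hf
    obtain ⟨hdiag, hprop⟩ := hF f hf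
    have hentry : ∀ i j : Fin n, (f * a - a * f) i j = (f i i - f j j) * a i j := by
      intro i j
      simp only [Matrix.sub_apply, Matrix.mul_apply]
      rw [Finset.sum_eq_single i, Finset.sum_eq_single j]
      · ring
      · intro k _ hk
        rw [hdiag hk, mul_zero]
      · intro h; exact absurd (Finset.mem_univ j) h
      · intro k _ hk
        rw [hdiag (Ne.symm hk), zero_mul]
      · intro h; exact absurd (Finset.mem_univ i) h
    rw [Matrix.matrix_eq_sum_single (f * a - a * f)]
    refine Submodule.sum_mem _ fun i _ => Submodule.sum_mem _ fun j _ => ?_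
    by_cases hz : (f * a - a * f) i j = 0
    · rw [hz, Matrix.single_zero]; exact K.zero_mem
    · rcases lt_trichotomy i j with hij | hij | hij
      · have hmem : Matrix.single i j (1 : ℂ) ∈ K := by
          by_contra hc
          exact hz (by rw [hentry i j, hprop i j hij hc, sub_self, zero_mul])
        have := K.smul_mem ((f * a - a * f) i j) hmem
        rwa [Matrix.smul_single, smul_eq_mul, mul_one] at this
      · exact absurd (by rw [hentry i j, hij, sub_self, zero_mul]) hz
      · exact absurd (by rw [hentry i j, ha i j hij, mul_zero]) hz
  obtain ⟨f, hfF, k, hkK, rfl⟩ := Submodule.mem_sup.mp hx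
  have : (f + k) * a - a * (f + k) = (f * a - a * f) + (k * a - a * k) := by noncomm_ring
  rw [this]
  exact Submodule.add_mem _ (Submodule.mem_sup_right (keyF f hfF))
    (Submodule.mem_sup_right (keyK k hkK))
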